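/- Consider a memoryless channel with finite input alphabet I, finite output alphabet O, and transition probabilities P_{ij}, together with a pairwise independent random code of 2^n codewords of length T (each codeword's symbols i.i.d. with distribution Q on I, distinct codewords pairwise independent, joint distribution symmetric). Under maximum-likelihood decoding, for any message m and any 0 < ρ ≤ 1, the average probability of error satisfies P_{e,m} ≤ 2^{−T(−ρR + E₀(ρ,Q))}, where R = n/T and E₀(ρ,Q) = −log₂ [ Σ_{j∈O} ( Σ_{i∈I} Q(i) P_{ij}^{1/(1+ρ)} )^{1+ρ} ]. -/

import Mathlib

open MeasureTheory
open scoped Classical ENNReal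

/-- Likelihood of output `y` given codeword `x` over a memoryless channel with
transition probabilities `P`. -/
noncomputable def likelihood {I O : Type*} [Fintype O] (P : I → O → ℝ) {T : ℕ}
    (x : Fin T → I) (y : Fin T → O) : ℝ := ∏ t, P (x t) (y t)

/-- Channel-averaged probability of ML-decoding error for codebook `c` and message `m`:
an error is counted when some other message is at least as likely as `m`. -/
noncomputable def mlErr {I O : Type*} [Fintype I] [Fintype O] (P : I → O → ℝ) {n T : ℕ}
    (c : (Fin n → Bool) → (Fin T → I)) (m : Fin n → Bool) : ℝ :=
  ∑ y : Fin T → O, likelihood P (c m) y *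
    (if ∃ m', m' ≠ m ∧ likelihood P (c m) y ≤ likelihood P (c m') y then 1 else 0)

/-- Gallager's function `E₀(ρ, Q)` with base-2 logarithm. -/
noncomputable def gallagerE0 {I O : Type*} [Fintype I] [Fintype O]
    (Q : I → ℝ) (P : I → O → ℝ) (ρ : ℝ) : ℝ :=
  -Real.logb 2 (∑ j : O, (∑ i : I, Q i * (P i j) ^ (1 / (1 + ρ))) ^ (1 + ρ))

private lemma rpow_le_tangent {ρ x c : ℝ} (hρ0 : 0 < ρ) (hρ1 : ρ ≤ 1) (hx : 0 ≤ x)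
    (hc : 0 < c) : x ^ ρ ≤ ρ * c ^ (ρ - 1) * x + (1 - ρ) * c ^ ρ := by
  rcases eq_or_lt_of_le hρ1 with h1 | h1
  · subst h1
    norm_num [Real.rpow_one]
  · have ht : 0 ≤ x / c := div_nonneg hx hc.le
    have hpq : Real.HolderConjugate ρ⁻¹ (1 - ρ)⁻¹ := by
      refine Real.holderConjugate_iff.mpr ⟨?_, ?_⟩
      · rw [← one_div, lt_div_iff₀ hρ0]; linarith
      · rw [inv_inv, inv_inv]; ring
    have key : (x / c) ^ ρ ≤ ρ * (x / c) + (1 - ρ) := by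
      have h := Real.young_inequality_of_nonneg (Real.rpow_nonneg ht ρ) zero_le_one hpq
      have e1 : x / c / ρ⁻¹ = ρ * (x / c) := by
        rw [div_eq_mul_inv (x / c), inv_inv]; ring
      rw [← Real.rpow_mul ht, mul_inv_cancel₀ hρ0.ne', Real.rpow_one, Real.one_rpow,
        e1, one_div, inv_inv, mul_one] at h
      linarith [h]
    have hcρ : (0:ℝ) < c ^ ρ := Real.rpow_pos_of_pos hc ρ
    have hxc : x ^ ρ = c ^ ρ * (x / c) ^ ρ := by
      rw [Real.div_rpow hx hc.le, mul_div_cancel₀ _ hcρ.ne']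
    rw [hxc]
    calc c ^ ρ * (x / c) ^ ρ ≤ c ^ ρ * (ρ * (x / c) + (1 - ρ)) :=
          mul_le_mul_of_nonneg_left key hcρ.le
      _ = ρ * c ^ (ρ - 1) * x + (1 - ρ) * c ^ ρ := by
          rw [Real.rpow_sub_one hc.ne']
          field_simp

theorem stmt10 {Ω I O : Type*} [MeasurableSpace Ω] (μ : Measure Ω) [IsProbabilityMeasure μ]
    [Fintype I] [Fintype O] (Q : I → ℝ) (P : I → O → ℝ)
    (hQ0 : ∀ i, 0 ≤ Q i) (hQ1 : ∑ i : I, Q i = 1)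
    (hP0 : ∀ i j, 0 ≤ P i j) (hP1 : ∀ i, ∑ j : O, P i j = 1)
    (n T : ℕ) (hT : 0 < T)
    (C : Ω → (Fin n → Bool) → (Fin T → I))
    -- (i) the coordinates of each codeword are i.i.d. with distribution Q
    (hiid : ∀ m v, (μ {ω | C ω m = v}).toReal = ∏ t, Q (v t))
    -- (ii) distinct codewords are pairwise independent
    (hpair : ∀ m m', m ≠ m' → ∀ v v',
      (μ {ω | C ω m = v ∧ C ω m' = v'}).toReal = (∏ t, Q (v t)) * (∏ t, Q (v' t)))
    -- (iii) the joint distribution of the codewords is symmetric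
    (hsymm : ∀ (σ : Equiv.Perm (Fin n → Bool)) (c : (Fin n → Bool) → Fin T → I),
      μ {ω | C ω = c} = μ {ω | C ω = c ∘ σ})
    (m : Fin n → Bool) (ρ : ℝ) (hρ0 : 0 < ρ) (hρ1 : ρ ≤ 1) :
    ∫ ω, mlErr P (C ω) m ∂μ ≤
      2 ^ (-(T : ℝ) * (-ρ * ((n : ℝ) / (T : ℝ)) + gallagerE0 Q P ρ)) := by
  classical
  have hs0 : (0:ℝ) < 1 + ρ := by linarith
  have hsinv : (0:ℝ) < 1 / (1 + ρ) := by positivity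
  -- pointwise facts about P, Q, likelihood
  have hP1' : ∀ i j, P i j ≤ 1 := by
    intro i j
    calc P i j ≤ ∑ j', P i j' :=
          Finset.single_le_sum (fun j' _ => hP0 i j') (Finset.mem_univ j)
      _ = 1 := hP1 i
  have hℓ0 : ∀ (v : Fin T → I) (y : Fin T → O), 0 ≤ likelihood P v y :=
    fun v y => Finset.prod_nonneg fun t _ => hP0 _ _
  have hℓ1 : ∀ (v : Fin T → I) (y : Fin T → O), likelihood P v y ≤ 1 :=
    fun v y => Finset.prod_le_one (fun t _ => hP0 _ _) (fun t _ => hP1' _ _)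
  -- abbreviations
  obtain ⟨a, ha_def⟩ : ∃ a : (Fin T → I) → (Fin T → O) → ℝ,
      a = fun v y => likelihood P v y ^ (1 / (1 + ρ)) := ⟨_, rfl⟩
  have ha0 : ∀ v y, 0 ≤ a v y := fun v y => by
    rw [ha_def]; exact Real.rpow_nonneg (hℓ0 v y) _
  have ha1 : ∀ v y, a v y ≤ 1 := fun v y => by
    rw [ha_def]; exact Real.rpow_le_one (hℓ0 v y) (hℓ1 v y) hsinv.le
  obtain ⟨q, hq_def⟩ : ∃ q : (Fin T → I) → ℝ, q = fun v => ∏ t, Q (v t) := ⟨_, rfl⟩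
  have hq0 : ∀ v, 0 ≤ q v := fun v => by
    rw [hq_def]; exact Finset.prod_nonneg fun t _ => hQ0 _
  obtain ⟨β, hβ_def⟩ : ∃ β : (Fin T → O) → ℝ, β = fun y => ∑ v, q v * a v y := ⟨_, rfl⟩
  have hβ0 : ∀ y, 0 ≤ β y := fun y => by
    rw [hβ_def]; exact Finset.sum_nonneg fun v _ => mul_nonneg (hq0 v) (ha0 v y)
  obtain ⟨γ, hγ_def⟩ : ∃ γ : O → ℝ, γ = fun j => ∑ i, Q i * P i j ^ (1 / (1 + ρ)) := ⟨_, rfl⟩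
  have hγ0 : ∀ j, 0 ≤ γ j := fun j => by
    rw [hγ_def]
    exact Finset.sum_nonneg fun i _ => mul_nonneg (hQ0 i) (Real.rpow_nonneg (hP0 i j) _)
  obtain ⟨S₀, hS_def⟩ : ∃ S₀ : ℝ, S₀ = ∑ j : O, γ j ^ (1 + ρ) := ⟨_, rfl⟩
  have hS0nn : 0 ≤ S₀ := by
    rw [hS_def]; exact Finset.sum_nonneg fun j _ => Real.rpow_nonneg (hγ0 j) _
  -- measurable hulls
  obtain ⟨V, hVsub, hVmeas, hVμ⟩ :
      ∃ V : (Fin T → I) → Set Ω, (∀ v, {ω | C ω m = v} ⊆ V v) ∧ (∀ v, MeasurableSet (V v)) ∧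
        (∀ v, (μ (V v)).toReal = q v) := by
    choose V h1 h2 h3 using fun v => exists_measurable_superset μ {ω | C ω m = v}
    exact ⟨V, h1, h2, fun v => by rw [h3, hiid m v, hq_def]⟩
  obtain ⟨U, hUsub, hUmeas, hUμ⟩ :
      ∃ U : (Fin n → Bool) → (Fin T → I) → (Fin T → I) → Set Ω,
        (∀ m' v v', {ω | C ω m = v ∧ C ω m' = v'} ⊆ U m' v v') ∧
        (∀ m' v v', MeasurableSet (U m' v v')) ∧
        (∀ m' v v', m' ≠ m → (μ (U m' v v')).toReal = q v * q v') := by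
    choose U h1 h2 h3 using fun (m' : Fin n → Bool) (v v' : Fin T → I) =>
      exists_measurable_superset μ {ω | C ω m = v ∧ C ω m' = v'}
    exact ⟨U, h1, h2, fun m' v v' hne => by
      rw [h3, hpair m m' (Ne.symm hne) v v', hq_def]⟩
  -- indicator basics
  have hind0 : ∀ (s : Set Ω) (ω : Ω), 0 ≤ Set.indicator s (fun _ => (1:ℝ)) ω :=
    fun s ω => Set.indicator_nonneg (fun _ _ => zero_le_one) ω
  have hind1 : ∀ (s : Set Ω) (ω : Ω), Set.indicator s (fun _ => (1:ℝ)) ω ≤ 1 := by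
    intro s ω; by_cases h : ω ∈ s <;> simp [h]
  -- the random variables W and G
  obtain ⟨W, hW_def⟩ : ∃ W : (Fin T → O) → (Fin T → I) → Ω → ℝ,
      W = fun y v ω => ∑ m' ∈ Finset.univ.erase m, ∑ v',
        a v' y * Set.indicator (U m' v v') (fun _ => (1:ℝ)) ω := ⟨_, rfl⟩
  have hW0 : ∀ y v ω, 0 ≤ W y v ω := by
    intro y v ω; rw [hW_def]
    exact Finset.sum_nonneg fun m' _ => Finset.sum_nonneg fun v' _ =>
      mul_nonneg (ha0 v' y) (hind0 _ ω)
  have hWmeas : ∀ y v, Measurable (W y v) := by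
    intro y v; rw [hW_def]
    exact Finset.measurable_sum _ fun m' _ => Finset.measurable_sum _ fun v' _ =>
      (measurable_const.indicator (hUmeas m' v v')).const_mul _
  obtain ⟨Kb, hKb_def⟩ : ∃ Kb : ℝ,
      Kb = ((Finset.univ.erase m).card : ℝ) * (Fintype.card (Fin T → I) : ℝ) := ⟨_, rfl⟩
  have hWle : ∀ y v ω, W y v ω ≤ Kb := by
    intro y v ω
    rw [hW_def, hKb_def]
    calc (∑ m' ∈ Finset.univ.erase m, ∑ v',
            a v' y * Set.indicator (U m' v v') (fun _ => (1:ℝ)) ω)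
        ≤ ∑ _m' ∈ Finset.univ.erase m, ∑ _v' : Fin T → I, (1:ℝ) :=
          Finset.sum_le_sum fun m' _ => Finset.sum_le_sum fun v' _ =>
            mul_le_one₀ (ha1 _ _) (hind0 _ _) (hind1 _ _)
      _ = ((Finset.univ.erase m).card : ℝ) * (Fintype.card (Fin T → I) : ℝ) := by
          simp [Finset.sum_const, Finset.card_univ, mul_comm]
  obtain ⟨G, hG_def⟩ : ∃ G : (Fin T → O) → (Fin T → I) → Ω → ℝ,
      G = fun y v ω => Set.indicator (V v) (fun _ => (1:ℝ)) ω * W y v ω ^ ρ := ⟨_, rfl⟩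
  have hG0 : ∀ y v ω, 0 ≤ G y v ω := by
    intro y v ω; rw [hG_def]
    exact mul_nonneg (hind0 _ _) (Real.rpow_nonneg (hW0 y v ω) _)
  have hGmeas : ∀ y v, Measurable (G y v) := by
    intro y v; rw [hG_def]
    exact (measurable_const.indicator (hVmeas v)).mul
      ((Real.continuous_rpow_const hρ0.le).measurable.comp (hWmeas y v))
  -- bounded measurable functions are integrable
  have hbdd_int : ∀ (f : Ω → ℝ) (c : ℝ), Measurable f → (∀ ω, 0 ≤ f ω) → (∀ ω, f ω ≤ c) →
      Integrable f μ := by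
    intro f c hm h0 hb
    refine (integrable_const c).mono' hm.aestronglyMeasurable (ae_of_all _ fun ω => ?_)
    rw [Real.norm_eq_abs, abs_of_nonneg (h0 ω)]; exact hb ω
  have hGle : ∀ y v ω, G y v ω ≤ Kb ^ ρ := by
    intro y v ω
    rw [hG_def]
    calc Set.indicator (V v) (fun _ => (1:ℝ)) ω * W y v ω ^ ρ
        ≤ 1 * (Kb ^ ρ) :=
          mul_le_mul (hind1 _ _) (Real.rpow_le_rpow (hW0 y v ω) (hWle y v ω) hρ0.le)
            (Real.rpow_nonneg (hW0 y v ω) _) zero_le_one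
      _ = Kb ^ ρ := one_mul _
  have hGint : ∀ y v, Integrable (G y v) μ :=
    fun y v => hbdd_int _ (Kb ^ ρ) (hGmeas y v) (hG0 y v) (hGle y v)
  -- the linear auxiliary function H
  obtain ⟨H, hH_def⟩ : ∃ H : (Fin T → O) → (Fin T → I) → Ω → ℝ,
      H = fun y v ω => Set.indicator (V v) (fun _ => (1:ℝ)) ω * W y v ω := ⟨_, rfl⟩
  have hH0 : ∀ y v ω, 0 ≤ H y v ω := by
    intro y v ω; rw [hH_def]; exact mul_nonneg (hind0 _ _) (hW0 y v ω)
  have hHle : ∀ y v ω, H y v ω ≤ Kb := by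
    intro y v ω; rw [hH_def]
    calc Set.indicator (V v) (fun _ => (1:ℝ)) ω * W y v ω ≤ 1 * Kb :=
          mul_le_mul (hind1 _ _) (hWle y v ω) (hW0 y v ω) zero_le_one
      _ = Kb := one_mul _
  have hHmeas : ∀ y v, Measurable (H y v) := by
    intro y v; rw [hH_def]
    exact (measurable_const.indicator (hVmeas v)).mul (hWmeas y v)
  have hHint : ∀ y v, Integrable (H y v) μ :=
    fun y v => hbdd_int _ Kb (hHmeas y v) (hH0 y v) (hHle y v)
  obtain ⟨M', hM_def⟩ : ∃ M' : ℝ, M' = ((Finset.univ.erase m).card : ℝ) := ⟨_, rfl⟩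
  have hM0 : 0 ≤ M' := by rw [hM_def]; exact Nat.cast_nonneg _
  -- the expected value of H is at most q v * (M' * β y)
  have hHbound : ∀ y v, ∫ ω, H y v ω ∂μ ≤ q v * (M' * β y) := by
    intro y v
    have hii : ∀ (s t : Set Ω) (ω : Ω), Set.indicator s (fun _ => (1:ℝ)) ω *
        Set.indicator t (fun _ => (1:ℝ)) ω = Set.indicator (s ∩ t) (fun _ => (1:ℝ)) ω := by
      intro s t ω
      by_cases hs : ω ∈ s <;> by_cases ht : ω ∈ t <;>
        simp [hs, ht, Set.indicator_of_mem, Set.indicator_of_notMem, Set.mem_inter_iff]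
    have expand : ∀ ω, H y v ω = ∑ m' ∈ Finset.univ.erase m, ∑ v',
        a v' y * Set.indicator (V v ∩ U m' v v') (fun _ => (1:ℝ)) ω := by
      intro ω
      rw [hH_def, hW_def]
      simp only [Finset.mul_sum]
      refine Finset.sum_congr rfl fun m' _ => Finset.sum_congr rfl fun v' _ => ?_
      rw [← hii]
      ring
    have hint : ∀ (m' : Fin n → Bool) (v' : Fin T → I),
        Integrable (fun ω => a v' y * Set.indicator (V v ∩ U m' v v') (fun _ => (1:ℝ)) ω) μ := by
      intro m' v'
      exact ((hbdd_int _ 1 (measurable_const.indicator ((hVmeas v).inter (hUmeas m' v v')))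
        (hind0 _) (hind1 _)).const_mul _)
    calc ∫ ω, H y v ω ∂μ
        = ∑ m' ∈ Finset.univ.erase m, ∑ v',
            a v' y * (μ (V v ∩ U m' v v')).toReal := by
          simp only [expand]
          rw [integral_finset_sum _ (fun m' _ => integrable_finset_sum _ fun v' _ => hint m' v')]
          refine Finset.sum_congr rfl fun m' _ => ?_
          rw [integral_finset_sum _ (fun v' _ => hint m' v')]
          refine Finset.sum_congr rfl fun v' _ => ?_
          rw [integral_const_mul, integral_indicator_const (1:ℝ)
            ((hVmeas v).inter (hUmeas m' v v')), smul_eq_mul, mul_one, measureReal_def]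
      _ ≤ ∑ m' ∈ Finset.univ.erase m, ∑ v', a v' y * (q v * q v') := by
          refine Finset.sum_le_sum fun m' hm' => Finset.sum_le_sum fun v' _ => ?_
          have hne : m' ≠ m := (Finset.mem_erase.mp hm').1
          refine mul_le_mul_of_nonneg_left ?_ (ha0 v' y)
          rw [← hUμ m' v v' hne]
          exact ENNReal.toReal_mono (measure_ne_top μ _)
            (measure_mono Set.inter_subset_right)
      _ = q v * (M' * β y) := by
          have inner : ∀ m' : Fin n → Bool, (∑ v', a v' y * (q v * q v')) = q v * β y := by
            intro m'
            rw [hβ_def, Finset.mul_sum]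
            exact Finset.sum_congr rfl fun v' _ => by ring
          rw [Finset.sum_congr rfl fun m' _ => inner m', Finset.sum_const, hM_def,
            nsmul_eq_mul]
          ring
  -- the key per-(y, v) bound on the expectation of G
  have hGbound : ∀ y v, ∫ ω, G y v ω ∂μ ≤ q v * (M' * β y) ^ ρ := by
    intro y v
    rcases (mul_nonneg hM0 (hβ0 y)).lt_or_eq with hc | hc
    · -- 0 < M' * β y : use the tangent-line bound
      have htb : ∀ ω, G y v ω ≤ ρ * (M' * β y) ^ (ρ - 1) * H y v ω +
          ((1 - ρ) * (M' * β y) ^ ρ) * Set.indicator (V v) (fun _ => (1:ℝ)) ω := by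
        intro ω
        by_cases hω : ω ∈ V v
        · rw [hG_def, hH_def]
          simp only [Set.indicator_of_mem hω, one_mul, mul_one]
          exact rpow_le_tangent hρ0 hρ1 (hW0 y v ω) hc
        · rw [hG_def, hH_def]
          simp only [Set.indicator_of_notMem hω, zero_mul, mul_zero, add_zero, le_refl]
      have hVind_int : Integrable (fun ω => Set.indicator (V v) (fun _ => (1:ℝ)) ω) μ :=
        hbdd_int _ 1 (measurable_const.indicator (hVmeas v)) (hind0 _) (hind1 _)
      calc ∫ ω, G y v ω ∂μ
          ≤ ∫ ω, (ρ * (M' * β y) ^ (ρ - 1) * H y v ω +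
              ((1 - ρ) * (M' * β y) ^ ρ) * Set.indicator (V v) (fun _ => (1:ℝ)) ω) ∂μ :=
            integral_mono (hGint y v)
              (((hHint y v).const_mul _).add (hVind_int.const_mul _)) htb
        _ = ρ * (M' * β y) ^ (ρ - 1) * (∫ ω, H y v ω ∂μ) +
              ((1 - ρ) * (M' * β y) ^ ρ) * q v := by
            rw [integral_add ((hHint y v).const_mul _) (hVind_int.const_mul _),
              integral_const_mul, integral_const_mul,
              integral_indicator_const (1:ℝ) (hVmeas v), smul_eq_mul, mul_one, measureReal_def, hVμ v]
        _ ≤ ρ * (M' * β y) ^ (ρ - 1) * (q v * (M' * β y)) +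
              ((1 - ρ) * (M' * β y) ^ ρ) * q v := by
            refine add_le_add_left (mul_le_mul_of_nonneg_left (hHbound y v) ?_) _
            positivity
        _ = q v * (M' * β y) ^ ρ := by
            rw [Real.rpow_sub_one hc.ne']
            field_simp [(mul_ne_zero_iff.mp hc.ne').1, (mul_ne_zero_iff.mp hc.ne').2]
            ring
    · -- M' * β y = 0 : the expectation of H vanishes, hence so does that of G
      have hq0' : q v * (M' * β y) ≤ 0 := by rw [← hc, mul_zero]
      have hJ0 : ∫ ω, H y v ω ∂μ = 0 :=
        le_antisymm (le_trans (hHbound y v) hq0') (integral_nonneg (hH0 y v))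
      have hae : (fun ω => H y v ω) =ᵐ[μ] 0 :=
        (integral_eq_zero_iff_of_nonneg (hH0 y v) (hHint y v)).mp hJ0
      have haeG : (fun ω => G y v ω) =ᵐ[μ] 0 := by
        refine hae.mono fun ω hω => ?_
        have hω' : Set.indicator (V v) (fun _ => (1:ℝ)) ω * W y v ω = 0 := by
          simpa [hH_def] using hω
        rcases mul_eq_zero.mp hω' with h0 | h0
        · simp [hG_def, h0]
        · simp [hG_def, h0, Real.zero_rpow hρ0.ne']
      rw [integral_congr_ae haeG, ← hc, Real.zero_rpow hρ0.ne', mul_zero]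
      simp
  -- pointwise bound : mlErr ≤ ∑ y ∑ v a v y * G y v
  have haa : ∀ (v : Fin T → I) (y : Fin T → O), a v y * a v y ^ ρ = likelihood P v y := by
    intro v y
    have hu : 1 / (1 + ρ) + 1 / (1 + ρ) * ρ = 1 := by field_simp
    rw [ha_def]
    simp only
    rw [← Real.rpow_mul (hℓ0 v y), ← Real.rpow_add' (hℓ0 v y) (by rw [hu]; norm_num), hu,
      Real.rpow_one]
  have hpoint : ∀ ω, mlErr P (C ω) m ≤ ∑ y, ∑ v, a v y * G y v ω := by
    intro ω
    simp only [mlErr]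
    refine Finset.sum_le_sum fun y _ => ?_
    by_cases hE : ∃ m', m' ≠ m ∧ likelihood P (C ω m) y ≤ likelihood P (C ω m') y
    · rw [if_pos hE, mul_one]
      obtain ⟨m₀, hm₀ne, hm₀⟩ := hE
      have hWge : a (C ω m) y ≤ W y (C ω m) ω := by
        have step1 : a (C ω m) y ≤ a (C ω m₀) y := by
          rw [ha_def]; exact Real.rpow_le_rpow (hℓ0 _ _) hm₀ hsinv.le
        have hmem : ω ∈ U m₀ (C ω m) (C ω m₀) :=
          hUsub m₀ (C ω m) (C ω m₀) ⟨rfl, rfl⟩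
        have step2 : a (C ω m₀) y ≤ ∑ v',
            a v' y * Set.indicator (U m₀ (C ω m) v') (fun _ => (1:ℝ)) ω := by
          have : a (C ω m₀) y = a (C ω m₀) y *
              Set.indicator (U m₀ (C ω m) (C ω m₀)) (fun _ => (1:ℝ)) ω := by
            rw [Set.indicator_of_mem hmem, mul_one]
          rw [this]
          exact Finset.single_le_sum
            (fun v' _ => mul_nonneg (ha0 v' y) (hind0 _ _)) (Finset.mem_univ _)
        have step3 : (∑ v', a v' y * Set.indicator (U m₀ (C ω m) v') (fun _ => (1:ℝ)) ω)
            ≤ W y (C ω m) ω := by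
          rw [hW_def]
          exact Finset.single_le_sum
            (f := fun m' => ∑ v', a v' y * Set.indicator (U m' (C ω m) v') (fun _ => (1:ℝ)) ω)
            (fun m' _ => Finset.sum_nonneg fun v' _ => mul_nonneg (ha0 v' y) (hind0 _ _))
            (Finset.mem_erase.mpr ⟨hm₀ne, Finset.mem_univ _⟩)
        exact le_trans step1 (le_trans step2 step3)
      have hVmem : ω ∈ V (C ω m) := hVsub (C ω m) rfl
      calc likelihood P (C ω m) y = a (C ω m) y * a (C ω m) y ^ ρ := (haa _ _).symm
        _ ≤ a (C ω m) y * W y (C ω m) ω ^ ρ :=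
            mul_le_mul_of_nonneg_left
              (Real.rpow_le_rpow (ha0 _ _) hWge hρ0.le) (ha0 _ _)
        _ = a (C ω m) y * G y (C ω m) ω := by
            rw [hG_def]
            simp only [Set.indicator_of_mem hVmem, one_mul]
        _ ≤ ∑ v, a v y * G y v ω :=
            Finset.single_le_sum (fun v _ => mul_nonneg (ha0 v y) (hG0 y v ω))
              (Finset.mem_univ _)
    · rw [if_neg hE, mul_zero]
      exact Finset.sum_nonneg fun v _ => mul_nonneg (ha0 v y) (hG0 y v ω)
  -- integrate the pointwise bound
  have hg_int : Integrable (fun ω => ∑ y, ∑ v, a v y * G y v ω) μ :=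
    integrable_finset_sum _ fun y _ => integrable_finset_sum _ fun v _ =>
      (hGint y v).const_mul _
  have hmain : ∫ ω, mlErr P (C ω) m ∂μ ≤ M' ^ ρ * ∑ y, β y ^ (1 + ρ) := by
    have h1 : ∫ ω, mlErr P (C ω) m ∂μ ≤ ∫ ω, (∑ y, ∑ v, a v y * G y v ω) ∂μ := by
      refine integral_mono_of_nonneg (ae_of_all _ fun ω => ?_) hg_int
        (ae_of_all _ hpoint)
      simp only [mlErr]
      refine Finset.sum_nonneg fun y _ => mul_nonneg (hℓ0 _ _) ?_
      split <;> norm_num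
    refine le_trans h1 ?_
    rw [integral_finset_sum _ (fun y _ => integrable_finset_sum _ fun v _ =>
      (hGint y v).const_mul _)]
    have h2 : ∀ y : Fin T → O, (∫ ω, (∑ v, a v y * G y v ω) ∂μ)
        ≤ β y * (M' ^ ρ * β y ^ ρ) := by
      intro y
      rw [integral_finset_sum _ (fun v _ => (hGint y v).const_mul _)]
      calc (∑ v, ∫ ω, a v y * G y v ω ∂μ)
          = ∑ v, a v y * ∫ ω, G y v ω ∂μ := by
            exact Finset.sum_congr rfl fun v _ => integral_const_mul _ _
        _ ≤ ∑ v, a v y * (q v * (M' * β y) ^ ρ) :=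
            Finset.sum_le_sum fun v _ =>
              mul_le_mul_of_nonneg_left (hGbound y v) (ha0 v y)
        _ = (∑ v, q v * a v y) * (M' * β y) ^ ρ := by
            rw [Finset.sum_mul]
            exact Finset.sum_congr rfl fun v _ => by ring
        _ = β y * (M' ^ ρ * β y ^ ρ) := by
            have hb : (∑ v, q v * a v y) = β y := by rw [hβ_def]
            rw [hb, Real.mul_rpow hM0 (hβ0 y)]
    calc (∑ y, ∫ ω, (∑ v, a v y * G y v ω) ∂μ)
        ≤ ∑ y, β y * (M' ^ ρ * β y ^ ρ) := Finset.sum_le_sum fun y _ => h2 y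
      _ = M' ^ ρ * ∑ y, β y ^ (1 + ρ) := by
          rw [Finset.mul_sum]
          refine Finset.sum_congr rfl fun y _ => ?_
          rw [Real.rpow_add' (hβ0 y) (by positivity), Real.rpow_one]
          ring
  -- identification of the sum with S₀ ^ T
  have hβγ : ∀ y : Fin T → O, β y = ∏ t, γ (y t) := by
    intro y
    have hterm : ∀ v : Fin T → I, q v * a v y =
        ∏ t, (Q (v t) * P (v t) (y t) ^ (1 / (1 + ρ))) := by
      intro v
      rw [hq_def, ha_def]
      simp only [likelihood]
      rw [← Real.finset_prod_rpow _ _ (fun t _ => hP0 _ _) _, ← Finset.prod_mul_distrib]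
    rw [hβ_def]
    simp only [hterm, hγ_def]
    rw [← Fintype.prod_sum (fun t i => Q i * P i (y t) ^ (1 / (1 + ρ)))]
  have hsumS : (∑ y : Fin T → O, β y ^ (1 + ρ)) = S₀ ^ T := by
    have hterm : ∀ y : Fin T → O, β y ^ (1 + ρ) = ∏ t, γ (y t) ^ (1 + ρ) := by
      intro y
      rw [hβγ y, ← Real.finset_prod_rpow _ _ (fun t _ => hγ0 _) _]
    simp only [hterm]
    rw [← Fintype.prod_sum (fun (t : Fin T) (j : O) => γ j ^ (1 + ρ)), ← hS_def,
      Finset.prod_const, Finset.card_univ, Fintype.card_fin]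
  -- positivity of S₀
  have hS0pos : 0 < S₀ := by
    obtain ⟨i₀, hi₀⟩ : ∃ i, Q i ≠ 0 := by
      by_contra hcon
      push_neg at hcon
      rw [Finset.sum_eq_zero (fun i _ => hcon i)] at hQ1
      norm_num at hQ1
    have hQi₀ : 0 < Q i₀ := (hQ0 i₀).lt_of_ne (Ne.symm hi₀)
    obtain ⟨j₀, hj₀⟩ : ∃ j, P i₀ j ≠ 0 := by
      by_contra hcon
      push_neg at hcon
      have := hP1 i₀
      rw [Finset.sum_eq_zero (fun j _ => hcon j)] at this
      norm_num at this
    have hPij : 0 < P i₀ j₀ := (hP0 i₀ j₀).lt_of_ne (Ne.symm hj₀)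
    have hγj : 0 < γ j₀ := by
      have h1 : 0 < Q i₀ * P i₀ j₀ ^ (1 / (1 + ρ)) :=
        mul_pos hQi₀ (Real.rpow_pos_of_pos hPij _)
      have h2 : Q i₀ * P i₀ j₀ ^ (1 / (1 + ρ)) ≤ γ j₀ := by
        rw [hγ_def]
        exact Finset.single_le_sum
          (fun i _ => mul_nonneg (hQ0 i) (Real.rpow_nonneg (hP0 i j₀) _))
          (Finset.mem_univ i₀)
      linarith
    have h3 : γ j₀ ^ (1 + ρ) ≤ S₀ := by
      rw [hS_def]
      exact Finset.single_le_sum (fun j _ => Real.rpow_nonneg (hγ0 j) _) (Finset.mem_univ j₀)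
    have h4 : 0 < γ j₀ ^ (1 + ρ) := Real.rpow_pos_of_pos hγj _
    linarith
  -- final assembly
  have hM'le : M' ≤ (2:ℝ) ^ n := by
    rw [hM_def]
    calc ((Finset.univ.erase m).card : ℝ) ≤ (Fintype.card (Fin n → Bool) : ℝ) := by
          exact_mod_cast Finset.card_le_univ _
      _ = (2:ℝ) ^ n := by
          rw [Fintype.card_fun]
          simp
  have hgal : gallagerE0 Q P ρ = -Real.logb 2 S₀ := by
    rw [gallagerE0, hS_def, hγ_def]
  have hTne : (T:ℝ) ≠ 0 := Nat.cast_ne_zero.mpr hT.ne'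
  have hexp : -(T : ℝ) * (-ρ * ((n : ℝ) / (T : ℝ)) + gallagerE0 Q P ρ) =
      ρ * (n:ℝ) + Real.logb 2 S₀ * (T:ℝ) := by
    rw [hgal]
    field_simp
    ring
  calc ∫ ω, mlErr P (C ω) m ∂μ ≤ M' ^ ρ * ∑ y, β y ^ (1 + ρ) := hmain
    _ = M' ^ ρ * S₀ ^ T := by rw [hsumS]
    _ ≤ (2:ℝ) ^ (ρ * (n:ℝ)) * S₀ ^ T := by
        refine mul_le_mul_of_nonneg_right ?_ (pow_nonneg hS0nn T)
        calc M' ^ ρ ≤ ((2:ℝ) ^ n) ^ ρ := Real.rpow_le_rpow hM0 hM'le hρ0.le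
          _ = (2:ℝ) ^ (ρ * (n:ℝ)) := by
              rw [← Real.rpow_natCast 2 n, ← Real.rpow_mul (by norm_num), mul_comm]
    _ = 2 ^ (-(T : ℝ) * (-ρ * ((n : ℝ) / (T : ℝ)) + gallagerE0 Q P ρ)) := by
        have h2S : (2:ℝ) ^ (Real.logb 2 S₀ * (T:ℝ)) = S₀ ^ T := by
          rw [Real.rpow_mul (by norm_num : (0:ℝ) ≤ 2),
            Real.rpow_logb two_pos (by norm_num) hS0pos, Real.rpow_natCast]
        rw [hexp, Real.rpow_add two_pos, h2S]
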